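/- Let r ≥ 1 be an integer, u > 1 real, and let x > 1 satisfy Σ_{j=1}^{r} x^j = u·r. Then u^{1/r} ≤ x ≤ u^{2/(r+1)}. -/

import Mathlib

theorem stmt_5 (r : ℕ) (hr : 1 ≤ r) (u x : ℝ) (hu : 1 < u) (hx : 1 < x)
    (hsaddle : ∑ j ∈ Finset.Icc 1 r, x ^ j = u * r) :
    u ^ ((1 : ℝ) / r) ≤ x ∧ x ≤ u ^ ((2 : ℝ) / (r + 1)) := by
  have hx0 : (0:ℝ) < x := lt_trans one_pos hx
  have hu0 : (0:ℝ) < u := lt_trans one_pos hu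
  have hr0 : (0:ℝ) < (r:ℝ) := by exact_mod_cast hr
  constructor
  · -- lower bound
    have h1 : u * r ≤ r * x ^ r := by
      rw [← hsaddle]
      calc ∑ j ∈ Finset.Icc 1 r, x ^ j ≤ ∑ j ∈ Finset.Icc 1 r, x ^ r := by
            apply Finset.sum_le_sum
            intro j hj
            exact pow_le_pow_right₀ hx.le (Finset.mem_Icc.mp hj).2
        _ = r * x ^ r := by
            rw [Finset.sum_const, Nat.card_Icc]
            simp [nsmul_eq_mul]
    have h2 : u ≤ x ^ r := by
      have := (mul_le_mul_iff_of_pos_right hr0).mp (by linarith [h1] : u * r ≤ x ^ r * r)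
      exact this
    have h3 : u ^ ((1:ℝ)/r) ≤ (x ^ r) ^ ((1:ℝ)/r) :=
      Real.rpow_le_rpow hu0.le h2 (by positivity)
    calc u ^ ((1:ℝ)/r) ≤ (x ^ r) ^ ((1:ℝ)/r) := h3
      _ = x := by
          rw [← Real.rpow_natCast x r, ← Real.rpow_mul hx0.le,
            mul_one_div, div_self (ne_of_gt hr0), Real.rpow_one]
  · -- upper bound via Chebyshev
    have hmono : Monotone fun j : ℕ => x ^ j := fun a b hab => pow_le_pow_right₀ hx.le hab
    have hanti : Antitone fun j : ℕ => x ^ (r + 1 - j) := fun a b hab =>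
      pow_le_pow_right₀ hx.le (Nat.sub_le_sub_left hab _)
    have hcheb := ((hmono.antivary hanti).antivaryOn (Finset.Icc 1 r : Finset ℕ)).card_mul_sum_le_sum_mul_sum
    have hsum1 : ∑ j ∈ Finset.Icc 1 r, x ^ j * x ^ (r + 1 - j) = r * x ^ (r + 1) := by
      have heq : ∀ j ∈ Finset.Icc 1 r, x ^ j * x ^ (r + 1 - j) = x ^ (r + 1) := by
        intro j hj
        rw [← pow_add]
        congr 1
        have := Finset.mem_Icc.mp hj
        omega
      rw [Finset.sum_congr rfl heq, Finset.sum_const, Nat.card_Icc]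
      simp [nsmul_eq_mul]
    have hsum2 : ∑ j ∈ Finset.Icc 1 r, x ^ (r + 1 - j) = ∑ j ∈ Finset.Icc 1 r, x ^ j := by
      apply Finset.sum_nbij' (i := fun j => r + 1 - j) (j := fun j => r + 1 - j)
      all_goals intro a ha
      all_goals simp only [Finset.mem_Icc] at *
      all_goals first | omega | (congr 1; omega)
    rw [Nat.card_Icc, Nat.add_sub_cancel, hsum1, hsum2, hsaddle] at hcheb
    have hpow : x ^ (r + 1) ≤ u ^ 2 := by
      have h := hcheb
      nlinarith [sq_nonneg u, hr0, mul_pos hr0 hr0]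
    have hr1 : (0:ℝ) < (r:ℝ) + 1 := by linarith
    have h3 : (x ^ (r+1)) ^ ((1:ℝ)/((r:ℝ)+1)) ≤ (u ^ 2) ^ ((1:ℝ)/((r:ℝ)+1)) :=
      Real.rpow_le_rpow (by positivity) hpow (by positivity)
    calc x = (x ^ (r+1)) ^ ((1:ℝ)/((r:ℝ)+1)) := by
            rw [← Real.rpow_natCast x (r+1), ← Real.rpow_mul hx0.le]
            push_cast
            rw [mul_one_div, div_self (ne_of_gt hr1), Real.rpow_one]
      _ ≤ (u ^ 2) ^ ((1:ℝ)/((r:ℝ)+1)) := h3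
      _ = u ^ ((2:ℝ)/((r:ℝ)+1)) := by
            rw [← Real.rpow_natCast u 2, ← Real.rpow_mul hu0.le]
            norm_num [div_eq_mul_inv]
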